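/- Let N ≥ 1 be an integer. Then (∏_{p ∈ N.primeFactors} p) · #{x ∈ (ℤ/Nℤ) × (ℤ/Nℤ) : addOrderOf x = N} = N · φ(N) · ∏_{p ∈ N.primeFactors} (p + 1), where φ is Euler's totient function. Equivalently, the number of elements of additive order N in (ℤ/Nℤ)² equals N·φ(N)·∏_{p | N}(1 + 1/p). -/

import Mathlib

-- d-torsion of ZMod n has cardinality d when d ∣ n
lemma zmod_torsion_card (n d : ℕ) (hn : 0 < n) (hd : d ∣ n) :
    Nat.card {a : ZMod n // d • a = 0} = d := by
  haveI : NeZero n := ⟨hn.ne'⟩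
  obtain ⟨c, hc⟩ := hd
  have hd0 : 0 < d := by
    rcases Nat.eq_zero_or_pos d with h | h
    · subst h; simp at hc; omega
    · exact h
  have hc0 : 0 < c := by
    rcases Nat.eq_zero_or_pos c with h | h
    · subst h; simp at hc; omega
    · exact h
  have key : ∀ a : ZMod n, d • a = 0 ↔ a ∈ AddSubgroup.zmultiples (c : ZMod n) := by
    intro a
    constructor
    · intro h
      have hcast : ((d * a.val : ℕ) : ZMod n) = 0 := by
        push_cast
        rw [ZMod.natCast_val, ZMod.cast_id, ← nsmul_eq_mul, h]
      have hdvd : n ∣ d * a.val := (ZMod.natCast_eq_zero_iff _ _).mp hcast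
      have hdvd' : d * c ∣ d * a.val := by rw [← hc]; exact hdvd
      have hcv : c ∣ a.val := (mul_dvd_mul_iff_left hd0.ne').mp hdvd'
      obtain ⟨m, hm⟩ := hcv
      rw [AddSubgroup.mem_zmultiples_iff]
      refine ⟨(m : ℤ), ?_⟩
      have : (m : ℤ) • ((c : ℕ) : ZMod n) = ((c * m : ℕ) : ZMod n) := by
        push_cast
        rw [zsmul_eq_mul]
        push_cast
        ring
      rw [this, ← hm, ZMod.natCast_val, ZMod.cast_id]
    · intro h
      rw [AddSubgroup.mem_zmultiples_iff] at h
      obtain ⟨k, rfl⟩ := h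
      rw [smul_comm]
      have : d • ((c : ℕ) : ZMod n) = 0 := by
        rw [nsmul_eq_mul, ← Nat.cast_mul, ← hc, ZMod.natCast_self]
      rw [this, smul_zero]
  calc Nat.card {a : ZMod n // d • a = 0}
      = Nat.card (AddSubgroup.zmultiples (c : ZMod n)) :=
        Nat.card_congr (Equiv.subtypeEquivRight key)
    _ = addOrderOf ((c : ℕ) : ZMod n) := Nat.card_zmultiples _
    _ = n / n.gcd c := ZMod.addOrderOf_coe c hn.ne'
    _ = d := by
        rw [Nat.gcd_eq_right ⟨d, by rw [hc, mul_comm]⟩, hc, Nat.mul_div_cancel _ hc0]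

lemma zmod_torsion_card_sq (n d : ℕ) (hn : 0 < n) (hd : d ∣ n) :
    Nat.card {x : ZMod n × ZMod n // d • x = 0} = d * d := by
  have e : {x : ZMod n × ZMod n // d • x = 0}
      ≃ {a : ZMod n // d • a = 0} × {b : ZMod n // d • b = 0} := by
    refine (Equiv.subtypeEquivRight ?_).trans Equiv.subtypeProdEquivProd
    intro x
    simp [Prod.ext_iff]
  rw [Nat.card_congr e, Nat.card_prod, zmod_torsion_card n d hn hd]

lemma zmod_order_dvd_card (n m : ℕ) (hn : 0 < n) (hm : m ∣ n) :
    Nat.card {x : ZMod n × ZMod n // addOrderOf x ∣ m} = m * m := by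
  rw [Nat.card_congr (Equiv.subtypeEquivRight
    (fun x => addOrderOf_dvd_iff_nsmul_eq_zero))]
  exact zmod_torsion_card_sq n m hn hm

lemma zmod_smul_self (n : ℕ) (x : ZMod n × ZMod n) : n • x = 0 := by
  apply Prod.ext <;> simp [nsmul_eq_mul, ZMod.natCast_self]

lemma zmod_order_dvd (n : ℕ) (x : ZMod n × ZMod n) : addOrderOf x ∣ n :=
  addOrderOf_dvd_of_nsmul_eq_zero (zmod_smul_self n x)

lemma J_prime_pow (p k : ℕ) (hp : p.Prime) (hk : 0 < k) :
    Nat.card {x : ZMod (p ^ k) × ZMod (p ^ k) // addOrderOf x = p ^ k}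
      = p ^ (2 * k) - p ^ (2 * (k - 1)) := by
  classical
  haveI : NeZero (p ^ k) := ⟨pow_ne_zero _ hp.pos.ne'⟩
  have hcompl : ∀ x : ZMod (p ^ k) × ZMod (p ^ k),
      addOrderOf x = p ^ k ↔ ¬ (addOrderOf x ∣ p ^ (k - 1)) := by
    intro x
    constructor
    · intro h hdvd
      rw [h] at hdvd
      have := Nat.le_of_dvd (pow_pos hp.pos _) hdvd
      have := Nat.pow_lt_pow_right hp.one_lt (show k - 1 < k by omega)
      omega
    · intro h
      obtain ⟨j, hj, hx⟩ := (Nat.dvd_prime_pow hp).mp (zmod_order_dvd _ x)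
      rcases eq_or_lt_of_le hj with rfl | hjk
      · exact hx
      · exact absurd (hx ▸ pow_dvd_pow p (by omega : j ≤ k - 1)) h
  have hsub : Fintype.card {x : ZMod (p ^ k) × ZMod (p ^ k) // addOrderOf x ∣ p ^ (k - 1)}
      = p ^ (k - 1) * p ^ (k - 1) := by
    rw [← Nat.card_eq_fintype_card]
    exact zmod_order_dvd_card _ _ (pow_pos hp.pos _) (pow_dvd_pow p (by omega))
  have htot : Fintype.card (ZMod (p ^ k) × ZMod (p ^ k)) = p ^ k * p ^ k := by
    rw [Fintype.card_prod, ZMod.card]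
  rw [Nat.card_congr (Equiv.subtypeEquivRight hcompl), Nat.card_eq_fintype_card,
    Fintype.card_subtype_compl, hsub, htot, ← pow_add, ← pow_add]
  congr 2 <;> omega

lemma J_mul (a b : ℕ) (ha : 0 < a) (hb : 0 < b) (hab : Nat.Coprime a b) :
    Nat.card {x : ZMod (a * b) × ZMod (a * b) // addOrderOf x = a * b} =
      Nat.card {x : ZMod a × ZMod a // addOrderOf x = a} *
        Nat.card {y : ZMod b × ZMod b // addOrderOf y = b} := by
  let e : ZMod (a * b) ≃+ ZMod a × ZMod b := (ZMod.chineseRemainder hab).toAddEquiv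
  let F : (ZMod (a * b) × ZMod (a * b)) ≃+ (ZMod a × ZMod a) × (ZMod b × ZMod b) :=
    (AddEquiv.prodCongr e e).trans (AddEquiv.prodProdProdComm _ _ _ _)
  have hF : ∀ x, addOrderOf (F x) = addOrderOf x := fun x =>
    addOrderOf_injective F.toAddMonoidHom F.injective x
  have key : ∀ y : (ZMod a × ZMod a) × (ZMod b × ZMod b),
      addOrderOf y = a * b ↔ (addOrderOf y.1 = a ∧ addOrderOf y.2 = b) := by
    intro y
    rw [Prod.addOrderOf]
    have h1 : addOrderOf y.1 ∣ a := zmod_order_dvd a y.1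
    have h2 : addOrderOf y.2 ∣ b := zmod_order_dvd b y.2
    constructor
    · intro hy
      have hco : Nat.Coprime (addOrderOf y.1) (addOrderOf y.2) :=
        Nat.Coprime.coprime_dvd_left h1 (Nat.Coprime.coprime_dvd_right h2 hab)
      rw [Nat.Coprime.lcm_eq_mul hco] at hy
      have hco2 : Nat.Coprime a (addOrderOf y.2) := Nat.Coprime.coprime_dvd_right h2 hab
      have hco1 : Nat.Coprime b (addOrderOf y.1) :=
        Nat.Coprime.coprime_dvd_right h1 hab.symm
      constructor
      · exact Nat.dvd_antisymm h1 (hco2.dvd_of_dvd_mul_right ⟨b, hy⟩)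
      · exact Nat.dvd_antisymm h2 (hco1.dvd_of_dvd_mul_left ⟨a, by rw [hy, mul_comm]⟩)
    · rintro ⟨hy1, hy2⟩
      rw [hy1, hy2, Nat.Coprime.lcm_eq_mul hab]
  calc Nat.card {x : ZMod (a * b) × ZMod (a * b) // addOrderOf x = a * b}
      = Nat.card {y : (ZMod a × ZMod a) × (ZMod b × ZMod b) // addOrderOf y = a * b} :=
        Nat.card_congr (Equiv.subtypeEquiv F.toEquiv (fun x => by
          change _ ↔ addOrderOf (F x) = a * b
          rw [hF x]))
    _ = Nat.card ({x : ZMod a × ZMod a // addOrderOf x = a} ×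
          {y : ZMod b × ZMod b // addOrderOf y = b}) :=
        Nat.card_congr ((Equiv.subtypeEquivRight key).trans
          (Equiv.subtypeProdEquivProd (p := fun u : ZMod a × ZMod a => addOrderOf u = a)
            (q := fun v : ZMod b × ZMod b => addOrderOf v = b)))
    _ = _ := Nat.card_prod _ _

theorem count_order_N_elements (N : ℕ) (hN : 1 ≤ N) :
    (∏ p ∈ N.primeFactors, p) *
      Nat.card {x : ZMod N × ZMod N // addOrderOf x = N} =
      N * N.totient * ∏ p ∈ N.primeFactors, (p + 1) := by
  induction N using Nat.recOnPosPrimePosCoprime with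
  | zero => omega
  | one =>
    have hcard : Nat.card {x : ZMod 1 × ZMod 1 // addOrderOf x = 1} = 1 := by
      haveI : Nonempty {x : ZMod 1 × ZMod 1 // addOrderOf x = 1} := ⟨⟨0, addOrderOf_zero⟩⟩
      exact Nat.card_unique
    simp [hcard]
  | prime_pow p k hpp hk =>
    have hp : p.Prime := hpp
    rw [Nat.primeFactors_prime_pow hk.ne' hp, Finset.prod_singleton, Finset.prod_singleton,
      J_prime_pow p k hp hk, Nat.totient_prime_pow hp hk]
    obtain ⟨m, rfl⟩ : ∃ m, k = m + 1 := ⟨k - 1, by omega⟩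
    simp only [Nat.add_sub_cancel]
    have hle : p ^ (2 * m) ≤ p ^ (2 * (m + 1)) :=
      Nat.pow_le_pow_right hp.pos (by omega)
    have hp1 : 1 ≤ p := hp.pos
    zify [hle, hp1]
    ring
  | coprime a b ha hb hab iha ihb =>
    have ha0 : 0 < a := by omega
    have hb0 : 0 < b := by omega
    have hdisj := Nat.Coprime.disjoint_primeFactors hab
    rw [Nat.primeFactors_mul ha0.ne' hb0.ne', Finset.prod_union hdisj,
      Finset.prod_union hdisj, J_mul a b ha0 hb0 hab, Nat.totient_mul hab,
      mul_mul_mul_comm, iha ha0, ihb hb0]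
    ring
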